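/- arXiv:2110.11324 — 2 statements merged into one kernel-verified Lean document; each statement's English description precedes it below -/
import Mathlib

section
/- Let p₁, p₂, p₃ ∈ ℝ² and let q ∈ ℝ² be a point with q ≠ pᵢ for each i, which minimizes the function x ↦ |x - p₁| + |x - p₂| + |x - p₃|. Then the three unit vectors uᵢ = (pᵢ - q)/|pᵢ - q| satisfy u₁ + u₂ + u₃ = 0; consequently the inner product ⟨uᵢ, uⱼ⟩ = -1/2 for i ≠ j, i.e., the segments from q to the three points meet pairwise at angles of 120 degrees. -/
open scoped RealInnerProductSpace

private lemma hasFDerivAt_dist_aux {E : Type*} [NormedAddCommGroup E]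
    [InnerProductSpace ℝ E] (p x : E) (hx : x ≠ p) :
    HasFDerivAt (fun y => dist y p)
      (innerSL ℝ (‖x - p‖⁻¹ • (x - p))) x := by
  have hsub : HasFDerivAt (fun y : E => y - p) (ContinuousLinearMap.id ℝ E) x :=
    (hasFDerivAt_id x).sub_const p
  have hsq : HasFDerivAt (fun y : E => ‖y - p‖ ^ 2)
      ((2 • (innerSL ℝ (x - p))).comp (ContinuousLinearMap.id ℝ E)) x :=
    by have := ((hasStrictFDerivAt_norm_sq (x - p)).hasFDerivAt).comp x hsub; exact this
  have hne : ‖x - p‖ ≠ 0 := norm_ne_zero_iff.mpr (sub_ne_zero.mpr hx)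
  have hne2 : ‖x - p‖ ^ 2 ≠ 0 := pow_ne_zero _ hne
  have hsqrt := hsq.sqrt hne2
  have heq : (fun y : E => Real.sqrt (‖y - p‖ ^ 2)) = fun y => dist y p := by
    funext y
    rw [Real.sqrt_sq (norm_nonneg _), dist_eq_norm]
  rw [heq] at hsqrt
  convert hsqrt using 1
  ext v
  rw [Real.sqrt_sq (norm_nonneg _)]
  simp only [innerSL_apply_apply, ContinuousLinearMap.smul_apply,
    ContinuousLinearMap.comp_apply, ContinuousLinearMap.id_apply,
    smul_eq_mul, real_inner_smul_left]
  field_simp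
  ring

/-- At a Fermat/Steiner point `q` (distinct from the three given points) minimizing the
sum of distances to `p₁, p₂, p₃` in the plane, the three unit vectors pointing from `q`
to the `pᵢ` sum to zero, and hence meet pairwise at angles of 120 degrees. -/
theorem fermat_point_120_degrees (p₁ p₂ p₃ q : EuclideanSpace ℝ (Fin 2))
    (h1 : q ≠ p₁) (h2 : q ≠ p₂) (h3 : q ≠ p₃)
    (hmin : ∀ x, dist q p₁ + dist q p₂ + dist q p₃ ≤ dist x p₁ + dist x p₂ + dist x p₃) :
    let u₁ := ‖p₁ - q‖⁻¹ • (p₁ - q)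
    let u₂ := ‖p₂ - q‖⁻¹ • (p₂ - q)
    let u₃ := ‖p₃ - q‖⁻¹ • (p₃ - q)
    u₁ + u₂ + u₃ = 0 ∧ (inner ℝ u₁ u₂ : ℝ) = -(1/2) ∧ (inner ℝ u₁ u₃ : ℝ) = -(1/2) ∧
      (inner ℝ u₂ u₃ : ℝ) = -(1/2) := by
  intro u₁ u₂ u₃
  set v₁ : EuclideanSpace ℝ (Fin 2) := ‖q - p₁‖⁻¹ • (q - p₁) with hv₁
  set v₂ : EuclideanSpace ℝ (Fin 2) := ‖q - p₂‖⁻¹ • (q - p₂) with hv₂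
  set v₃ : EuclideanSpace ℝ (Fin 2) := ‖q - p₃‖⁻¹ • (q - p₃) with hv₃
  have hd1 := hasFDerivAt_dist_aux p₁ q h1
  have hd2 := hasFDerivAt_dist_aux p₂ q h2
  have hd3 := hasFDerivAt_dist_aux p₃ q h3
  have hsum : HasFDerivAt (fun x => dist x p₁ + dist x p₂ + dist x p₃)
      (innerSL ℝ v₁ + innerSL ℝ v₂ + innerSL ℝ v₃) q := (hd1.add hd2).add hd3
  have hloc : IsLocalMin (fun x => dist x p₁ + dist x p₂ + dist x p₃) q :=
    Filter.Eventually.of_forall hmin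
  have hzero := hloc.hasFDerivAt_eq_zero hsum
  have hv : v₁ + v₂ + v₃ = 0 := by
    have happ := congrArg (fun L : EuclideanSpace ℝ (Fin 2) →L[ℝ] ℝ =>
      L (v₁ + v₂ + v₃)) hzero
    simp only [ContinuousLinearMap.add_apply, innerSL_apply_apply,
      ContinuousLinearMap.zero_apply] at happ
    have : ⟪v₁ + v₂ + v₃, v₁ + v₂ + v₃⟫ = 0 := by
      simp only [inner_add_left]
      linarith
    exact inner_self_eq_zero.mp this
  have hu₁ : u₁ = -v₁ := by
    rw [hv₁, show q - p₁ = -(p₁ - q) by abel, norm_neg, smul_neg, neg_neg]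
  have hu₂ : u₂ = -v₂ := by
    rw [hv₂, show q - p₂ = -(p₂ - q) by abel, norm_neg, smul_neg, neg_neg]
  have hu₃ : u₃ = -v₃ := by
    rw [hv₃, show q - p₃ = -(p₃ - q) by abel, norm_neg, smul_neg, neg_neg]
  have husum : u₁ + u₂ + u₃ = 0 := by
    rw [hu₁, hu₂, hu₃]
    rw [show -v₁ + -v₂ + -v₃ = -(v₁ + v₂ + v₃) by abel, hv, neg_zero]
  have hn1 : ‖u₁‖ = 1 := by
    rw [norm_smul, norm_inv, norm_norm,
      inv_mul_cancel₀ (norm_ne_zero_iff.mpr (sub_ne_zero.mpr (Ne.symm h1)))]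
  have hn2 : ‖u₂‖ = 1 := by
    rw [norm_smul, norm_inv, norm_norm,
      inv_mul_cancel₀ (norm_ne_zero_iff.mpr (sub_ne_zero.mpr (Ne.symm h2)))]
  have hn3 : ‖u₃‖ = 1 := by
    rw [norm_smul, norm_inv, norm_norm,
      inv_mul_cancel₀ (norm_ne_zero_iff.mpr (sub_ne_zero.mpr (Ne.symm h3)))]
  have hi1 : ⟪u₁, u₁⟫ = 1 := by rw [real_inner_self_eq_norm_sq, hn1]; norm_num
  have hi2 : ⟪u₂, u₂⟫ = 1 := by rw [real_inner_self_eq_norm_sq, hn2]; norm_num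
  have hi3 : ⟪u₃, u₃⟫ = 1 := by rw [real_inner_self_eq_norm_sq, hn3]; norm_num
  have key : ∀ a b c : EuclideanSpace ℝ (Fin 2), a + b + c = 0 →
      ⟪a, a⟫ = 1 → ⟪b, b⟫ = 1 → ⟪c, c⟫ = 1 → ⟪a, b⟫ = -(1/2) := by
    intro a b c habc ha hb hc
    have hc' : c = -(a + b) := by
      rw [eq_neg_iff_add_eq_zero]; rw [← habc]; abel
    rw [hc', inner_neg_neg, inner_add_add_self, ha, hb,
      real_inner_comm b a] at hc
    have := real_inner_comm a b
    linarith
  refine ⟨husum, key u₁ u₂ u₃ husum hi1 hi2 hi3, ?_, ?_⟩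
  · exact key u₁ u₃ u₂ (by rw [← husum]; abel) hi1 hi3 hi2
  · exact key u₂ u₃ u₁ (by rw [← husum]; abel) hi2 hi3 hi1
end

section
/- Let ω be the standard Kähler (symplectic) form on ℂⁿ ≅ ℝ²ⁿ, given by ω = Σᵢ dxᵢ ∧ dyᵢ. Then for any two vectors v, w ∈ ℝ²ⁿ one has |ω(v,w)| ≤ |v||w|, and more precisely |ω(v,w)| ≤ |v ∧ w| (the area of the parallelogram spanned by v and w), with equality |ω(v,w)| = |v ∧ w| if and only if the plane spanned by v and w is a complex line (i.e., invariant under multiplication by i). -/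
set_option maxHeartbeats 1000000

lemma wirtinger_aux {n : ℕ} (v : EuclideanSpace ℂ (Fin n)) (r : ℂ) :
    |(inner ℂ v (r • v) : ℂ).im|
      = Real.sqrt (‖v‖ ^ 2 * ‖r • v‖ ^ 2 - ((inner ℂ v (r • v) : ℂ).re) ^ 2) := by
  have h1 : (inner ℂ v (r • v) : ℂ) = r * ((‖v‖ ^ 2 : ℝ) : ℂ) := by
    rw [inner_smul_right, inner_self_eq_norm_sq_to_K]; push_cast; rfl
  have h2 : ‖r • v‖ = ‖r‖ * ‖v‖ := by
    rw [norm_smul]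
  have h3 : (‖r‖) ^ 2 = r.re ^ 2 + r.im ^ 2 := by
    rw [Complex.sq_norm, Complex.normSq_apply]; ring
  rw [h1, h2]
  simp only [Complex.mul_re, Complex.mul_im, Complex.ofReal_re, Complex.ofReal_im,
    mul_zero, zero_mul, sub_zero, add_zero, zero_add]
  have : ‖v‖ ^ 2 * (‖r‖ * ‖v‖) ^ 2 - (r.re * ‖v‖ ^ 2) ^ 2
      = (r.im * ‖v‖ ^ 2) ^ 2 := by rw [mul_pow, h3]; ring
  rw [this, Real.sqrt_sq_eq_abs]

lemma wirtinger_smul {n : ℕ} (t : ℝ) (x : EuclideanSpace ℂ (Fin n)) :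
    t • x = ((t : ℂ)) • x := by
  rw [← algebraMap_smul ℂ t x]; norm_num

lemma wirtinger_span {n : ℕ} (v : EuclideanSpace ℂ (Fin n)) (r : ℂ) (hri : r.im ≠ 0) :
    ∀ z ∈ Submodule.span ℝ ({v, r • v} : Set (EuclideanSpace ℂ (Fin n))),
      (Complex.I : ℂ) • z ∈ Submodule.span ℝ ({v, r • v} : Set (EuclideanSpace ℂ (Fin n))) := by
  intro z hz
  rw [Submodule.mem_span_pair] at hz ⊢
  obtain ⟨s, t, rfl⟩ := hz
  set c : ℂ := Complex.I * ((s : ℂ) + (t : ℂ) * r) with hc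
  set β : ℝ := c.im / r.im with hβ
  set α : ℝ := c.re - β * r.re with hα
  refine ⟨α, β, ?_⟩
  have hdec : (α : ℂ) + (β : ℂ) * r = c := by
    have hβim : β * r.im = c.im := by rw [hβ]; exact div_mul_cancel₀ _ hri
    apply Complex.ext
    · simp [hα, Complex.add_re, Complex.mul_re]
    · simpa [Complex.add_im, Complex.mul_im] using hβim
  rw [wirtinger_smul s v, wirtinger_smul t (r • v), wirtinger_smul α v, wirtinger_smul β (r • v),
    smul_smul, smul_smul, smul_add, smul_smul, smul_smul, ← add_smul, ← add_smul, hdec, hc]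
  congr 1
  ring

/-- Wirtinger's inequality: for the standard Kähler form `ω(v,w) = Im ⟪v,w⟫` on `ℂⁿ`,
one has `|ω(v,w)| ≤ |v||w|` and `|ω(v,w)| ≤ |v ∧ w|`, where
`|v ∧ w| = √(|v|²|w|² - ⟨v,w⟩²)` is the area of the parallelogram spanned by `v, w`
(with `⟨v,w⟩ = Re ⟪v,w⟫` the real inner product); moreover, if `v, w` are linearly
independent over `ℝ`, equality `|ω(v,w)| = |v ∧ w|` holds if and only if the real plane
spanned by `v` and `w` is a complex line, i.e. invariant under multiplication by `i`. -/
theorem wirtinger_inequality (n : ℕ) (v w : EuclideanSpace ℂ (Fin n)) :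
    |(inner ℂ v w : ℂ).im| ≤ ‖v‖ * ‖w‖ ∧
    |(inner ℂ v w : ℂ).im| ≤ Real.sqrt (‖v‖ ^ 2 * ‖w‖ ^ 2 - ((inner ℂ v w : ℂ).re) ^ 2) ∧
    (LinearIndependent ℝ ![v, w] →
      (|(inner ℂ v w : ℂ).im| = Real.sqrt (‖v‖ ^ 2 * ‖w‖ ^ 2 - ((inner ℂ v w : ℂ).re) ^ 2) ↔
        ∀ z ∈ Submodule.span ℝ ({v, w} : Set (EuclideanSpace ℂ (Fin n))),
          (Complex.I : ℂ) • z ∈ Submodule.span ℝ ({v, w} : Set (EuclideanSpace ℂ (Fin n))))) := by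
  have habs : ‖(inner ℂ v w : ℂ)‖ ^ 2 = ((inner ℂ v w : ℂ).re) ^ 2 + ((inner ℂ v w : ℂ).im) ^ 2 := by
    rw [Complex.sq_norm, Complex.normSq_apply]; ring
  have hCS : ‖(inner ℂ v w : ℂ)‖ ≤ ‖v‖ * ‖w‖ := norm_inner_le_norm v w
  have hbabs : |(inner ℂ v w : ℂ).im| ≤ ‖(inner ℂ v w : ℂ)‖ := by
    exact Complex.abs_im_le_norm _
  have h1 : |(inner ℂ v w : ℂ).im| ≤ ‖v‖ * ‖w‖ := le_trans hbabs hCS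
  have hb2 : ((inner ℂ v w : ℂ).im) ^ 2 ≤ ‖v‖ ^ 2 * ‖w‖ ^ 2 - ((inner ℂ v w : ℂ).re) ^ 2 := by
    nlinarith [norm_nonneg (inner ℂ v w : ℂ), mul_nonneg (norm_nonneg v) (norm_nonneg w)]
  have h2 : |(inner ℂ v w : ℂ).im| ≤ Real.sqrt (‖v‖ ^ 2 * ‖w‖ ^ 2 - ((inner ℂ v w : ℂ).re) ^ 2) := by
    rw [← Real.sqrt_sq_eq_abs]; exact Real.sqrt_le_sqrt hb2
  refine ⟨h1, h2, fun hli => ?_⟩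
  have hv0 : v ≠ 0 := by
    have := hli.ne_zero 0; simpa using this
  have hw0 : w ≠ 0 := by
    have := hli.ne_zero 1; simpa using this
  constructor
  · intro heq
    have hX : ((inner ℂ v w : ℂ).im) ^ 2 = ‖v‖ ^ 2 * ‖w‖ ^ 2 - ((inner ℂ v w : ℂ).re) ^ 2 := by
      have h0 : (0:ℝ) ≤ ‖v‖ ^ 2 * ‖w‖ ^ 2 - ((inner ℂ v w : ℂ).re) ^ 2 := le_trans (sq_nonneg ((inner ℂ v w : ℂ).im)) hb2
      calc ((inner ℂ v w : ℂ).im) ^ 2 = |(inner ℂ v w : ℂ).im| ^ 2 := (sq_abs _).symm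
        _ = Real.sqrt (‖v‖ ^ 2 * ‖w‖ ^ 2 - ((inner ℂ v w : ℂ).re) ^ 2) ^ 2 := by rw [heq]
        _ = ‖v‖ ^ 2 * ‖w‖ ^ 2 - ((inner ℂ v w : ℂ).re) ^ 2 := Real.sq_sqrt h0
    have hnorm : ‖(inner ℂ v w : ℂ)‖ = ‖v‖ * ‖w‖ := by
      have h0 : ‖(inner ℂ v w : ℂ)‖ ^ 2 = (‖v‖ * ‖w‖) ^ 2 := by
        rw [habs]; nlinarith [hX]
      have := congrArg Real.sqrt h0
      rwa [Real.sqrt_sq (norm_nonneg _),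
        Real.sqrt_sq (mul_nonneg (norm_nonneg v) (norm_nonneg w))] at this
    obtain ⟨r, hr0, hw⟩ := (norm_inner_eq_norm_iff hv0 hw0).mp hnorm
    have hri : r.im ≠ 0 := by
      intro him
      have hrre : ((r.re : ℂ)) = r := by apply Complex.ext <;> simp [him]
      have hwre : w = (r.re : ℝ) • v := by rw [hw, wirtinger_smul, hrre]
      exact (LinearIndependent.pair_iff' hv0).mp hli r.re hwre.symm
    subst hw
    exact wirtinger_span v r hri
  · intro hinv
    have hIv : (Complex.I : ℂ) • v ∈ Submodule.span ℝ ({v, w} : Set (EuclideanSpace ℂ (Fin n))) :=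
      hinv v (Submodule.subset_span (by simp))
    rw [Submodule.mem_span_pair] at hIv
    obtain ⟨s, t, hst⟩ := hIv
    have ht : t ≠ 0 := by
      intro ht0
      rw [ht0, zero_smul, add_zero, wirtinger_smul] at hst
      have h0 : ((s : ℂ) - Complex.I) • v = 0 := by
        rw [sub_smul, hst, sub_self]
      rcases smul_eq_zero.mp h0 with h | h
      · have := congrArg Complex.im (sub_eq_zero.mp h)
        simp at this
      · exact hv0 h
    have ht' : (t : ℂ) ≠ 0 := by exact_mod_cast ht
    have key : (t : ℂ) • w = ((Complex.I : ℂ) - (s : ℂ)) • v := by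
      rw [wirtinger_smul s v, wirtinger_smul t w] at hst
      rw [sub_smul, eq_sub_iff_add_eq, add_comm]
      exact hst
    have hw : w = (((Complex.I : ℂ) - (s : ℂ)) / (t : ℂ)) • v := by
      have := congrArg (fun x => ((t : ℂ))⁻¹ • x) key
      simp only [smul_smul, inv_mul_cancel₀ ht', one_smul] at this
      rw [this]
      congr 1
      rw [div_eq_inv_mul]
    rw [hw]
    exact wirtinger_aux v _
end
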